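/- Let k be a perfect field of characteristic p > 0 and let f ∈ k[X₁,…,Xₙ] be a nonzero polynomial which is homogeneous with respect to the standard grading. Suppose there exists a monomial order on k[X₁,…,Xₙ] such that the leading monomial of f is squarefree. Then the quotient ring k[X₁,…,Xₙ]/(f) is F-split. -/

import Mathlib

open MvPolynomial

/-- `lt` is (the strict relation of) a monomial order on exponent vectors: a strict total
order for which `0` (i.e. the monomial `1`) is the least element and which is compatible
with addition of exponent vectors (i.e. with multiplication of monomials). -/
def IsMonomialOrder {σ : Type*} (lt : (σ →₀ ℕ) → (σ →₀ ℕ) → Prop) : Prop :=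
  IsStrictTotalOrder (σ →₀ ℕ) lt ∧
    (∀ u : σ →₀ ℕ, u ≠ 0 → lt 0 u) ∧
    (∀ u v w : σ →₀ ℕ, lt u v → lt (u + w) (v + w))

/-- `d` is the leading monomial of `f` with respect to the strict order `lt` on
exponent vectors: `d` occurs in `f` and dominates every other exponent in the support. -/
def IsLeadingMonomial {σ : Type*} {R : Type*} [CommSemiring R]
    (lt : (σ →₀ ℕ) → (σ →₀ ℕ) → Prop) (f : MvPolynomial σ R) (d : σ →₀ ℕ) : Prop :=
  d ∈ f.support ∧ ∀ e ∈ f.support, e ≠ d → lt e d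

/-- A commutative ring `R` (of characteristic `p`) is `F`-split if there is an additive
map `φ : R → R` with `φ (r ^ p * s) = r * φ s` and `φ 1 = 1`, i.e. the Frobenius splits. -/
def IsFSplit (p : ℕ) (R : Type*) [CommRing R] : Prop :=
  ∃ φ : R →+ R, (∀ r s : R, φ (r ^ p * s) = r * φ s) ∧ φ 1 = 1

section Aux

variable {K : Type*} [Field K] {n : ℕ} {lt : (Fin n →₀ ℕ) → (Fin n →₀ ℕ) → Prop}

lemma aux_dom (hlt : IsMonomialOrder lt) {f g : MvPolynomial (Fin n) K} {mf mg : Fin n →₀ ℕ}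
    (hf : IsLeadingMonomial lt f mf) (hg : IsLeadingMonomial lt g mg) :
    ∀ a ∈ f.support, ∀ b ∈ g.support, (a, b) ≠ (mf, mg) → lt (a + b) (mf + mg) := by
  obtain ⟨hsto, h0, hadd⟩ := hlt
  haveI := hsto
  intro a ha b hb hne
  by_cases hamf : a = mf
  · subst hamf
    have hbmg : b ≠ mg := by
      intro h; exact hne (by rw [h])
    have h1 : lt b mg := hg.2 b hb hbmg
    have h2 := hadd b mg a h1
    simpa [add_comm] using h2
  · have h1 : lt a mf := hf.2 a ha hamf
    have h2 : lt (a + b) (mf + b) := hadd a mf b h1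
    by_cases hbmg : b = mg
    · subst hbmg; exact h2
    · have h3 : lt b mg := hg.2 b hb hbmg
      have h4 : lt (mf + b) (mf + mg) := by simpa [add_comm] using hadd b mg mf h3
      exact _root_.trans_of lt h2 h4

lemma aux_lead_mul (hlt : IsMonomialOrder lt) {f g : MvPolynomial (Fin n) K}
    {mf mg : Fin n →₀ ℕ}
    (hf : IsLeadingMonomial lt f mf) (hg : IsLeadingMonomial lt g mg) :
    IsLeadingMonomial lt (f * g) (mf + mg) ∧
      coeff (mf + mg) (f * g) = coeff mf f * coeff mg g := by
  classical
  have hdom := aux_dom hlt hf hg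
  haveI := hlt.1
  have hcoeff : coeff (mf + mg) (f * g) = coeff mf f * coeff mg g := by
    rw [coeff_mul]
    apply Finset.sum_eq_single (mf, mg)
    · intro q hq hne
      rw [Finset.HasAntidiagonal.mem_antidiagonal] at hq
      by_cases h1 : coeff q.1 f = 0
      · rw [h1, zero_mul]
      by_cases h2 : coeff q.2 g = 0
      · rw [h2, mul_zero]
      exfalso
      have := hdom q.1 (mem_support_iff.2 h1) q.2 (mem_support_iff.2 h2) (by simpa using hne)
      rw [hq] at this
      exact irrefl_of lt _ this
    · intro h
      exact absurd (by simp : (mf, mg) ∈ Finset.HasAntidiagonal.antidiagonal (mf + mg)) h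
  refine ⟨⟨?_, ?_⟩, hcoeff⟩
  · rw [mem_support_iff, hcoeff]
    exact mul_ne_zero (mem_support_iff.1 hf.1) (mem_support_iff.1 hg.1)
  · intro x hx hxne
    obtain ⟨a, ha, b, hb, rfl⟩ := Finset.mem_add.1 (support_mul f g hx)
    refine hdom a ha b hb ?_
    intro hc
    apply hxne
    rw [Prod.mk.injEq] at hc
    rw [hc.1, hc.2]

lemma aux_lead_pow (hlt : IsMonomialOrder lt) {f : MvPolynomial (Fin n) K} {m : Fin n →₀ ℕ}
    (hf : IsLeadingMonomial lt f m) :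
    ∀ j : ℕ, IsLeadingMonomial lt (f ^ (j + 1)) ((j + 1) • m) ∧
      coeff ((j + 1) • m) (f ^ (j + 1)) = (coeff m f) ^ (j + 1)
  | 0 => by simpa [one_nsmul] using hf
  | j + 1 => by
    obtain ⟨h1, h2⟩ := aux_lead_pow hlt hf j
    obtain ⟨h3, h4⟩ := aux_lead_mul hlt h1 hf
    have hpow : f ^ (j + 2) = f ^ (j + 1) * f := pow_succ f (j + 1)
    have hsmul : (j + 2) • m = (j + 1) • m + m := succ_nsmul m (j + 1)
    constructor
    · rw [hpow, hsmul]; exact h3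
    · rw [hpow, hsmul, h4, h2]; ring

end Aux

/-- over a perfect field `k` of characteristic `p > 0`, if a nonzero
homogeneous polynomial `f ∈ k[X₁,…,Xₙ]` has a squarefree leading monomial with respect to
some monomial order, then `k[X₁,…,Xₙ]/(f)` is `F`-split. -/
theorem statement11 (p : ℕ) (hp : p.Prime) (k : Type*) [Field k] [CharP k p]
    (hperfect : Function.Surjective fun x : k => x ^ p)
    (n : ℕ) (f : MvPolynomial (Fin n) k) (hf0 : f ≠ 0) (d : ℕ)
    (hfhom : f.IsHomogeneous d)
    (lt : (Fin n →₀ ℕ) → (Fin n →₀ ℕ) → Prop) (hlt : IsMonomialOrder lt)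
    (m : Fin n →₀ ℕ) (hm : IsLeadingMonomial lt f m) (hsqfree : ∀ i, m i ≤ 1) :
    IsFSplit p (MvPolynomial (Fin n) k ⧸ Ideal.span {f}) := by
  classical
  have hp2 : 2 ≤ p := hp.two_le
  haveI : Fact p.Prime := ⟨hp⟩
  haveI : ExpChar k p := ExpChar.prime hp
  haveI : PerfectRing k p := PerfectRing.ofSurjective k p (by
    intro x
    obtain ⟨y, hy⟩ := hperfect x
    exact ⟨y, by rw [frobenius_def]; exact hy⟩)
  set ρ : k →+* k := ((frobeniusEquiv k p).symm : k ≃+* k).toRingHom with hρdef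
  have hρpow : ∀ c : k, ρ (c ^ p) = c := by
    intro c
    have : c ^ p = frobenius k p c := (frobenius_def ..).symm
    rw [hρdef]
    show (frobeniusEquiv k p).symm (c ^ p) = c
    rw [this]
    exact frobeniusEquiv_symm_apply_frobenius k p c
  have hρinj : Function.Injective ρ := ρ.injective
  set e : Fin n →₀ ℕ := (p - 1) • m with hedef
  have he_le : ∀ i, e i ≤ p - 1 := by
    intro i
    rw [hedef, Finsupp.smul_apply, smul_eq_mul]
    calc (p-1) * m i ≤ (p-1) * 1 := Nat.mul_le_mul_left _ (hsqfree i)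
    _ = p - 1 := mul_one _
  have hinj : Function.Injective fun a : Fin n →₀ ℕ => p • a + e := by
    intro a b hab
    simp only at hab
    have h2 : p • a = p • b := add_right_cancel hab
    ext i
    have h3 : (p • a) i = (p • b) i := by rw [h2]
    simp only [Finsupp.smul_apply, smul_eq_mul] at h3
    exact Nat.eq_of_mul_eq_mul_left (by omega) h3
  -- the e-component p-th root projection
  set π : MvPolynomial (Fin n) k →+ MvPolynomial (Fin n) k :=
    (AddMonoidAlgebra.coeffAddEquiv (R := k) (M := Fin n →₀ ℕ)).symm.toAddMonoidHom.comp
    ((Finsupp.mapRange.addMonoidHom ρ.toAddMonoidHom).comp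
      ((Finsupp.comapDomain.addMonoidHom hinj).comp
        (AddMonoidAlgebra.coeffAddEquiv (R := k) (M := Fin n →₀ ℕ)).toAddMonoidHom)) with hπdef
  have hπcoeff : ∀ (g : MvPolynomial (Fin n) k) (a : Fin n →₀ ℕ),
      coeff a (π g) = ρ (coeff (p • a + e) g) := fun g a => rfl
  -- the finsupp order facts
  have hle_iff : ∀ (a b : Fin n →₀ ℕ), p • b ≤ p • a + e ↔ b ≤ a := by
    intro a b
    constructor
    · intro h
      rw [Finsupp.le_def]
      intro i
      have hi := Finsupp.le_def.1 h i
      simp only [Finsupp.coe_smul, Pi.smul_apply, smul_eq_mul, Finsupp.add_apply,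
        Finsupp.coe_add] at hi
      by_contra hc
      push_neg at hc
      have h1 : a i + 1 ≤ b i := hc
      have h2 : p * (a i + 1) ≤ p * b i := Nat.mul_le_mul_left _ h1
      rw [Nat.mul_add, Nat.mul_one] at h2
      have h3 := he_le i
      -- hi : p * b i ≤ p * a i + e i
      have hi' : p * b i ≤ p * a i + e i := by
        have := hi
        simpa using this
      generalize p * a i = A at h2 hi'
      generalize p * b i = B at h2 hi'
      omega
    · intro h
      rw [Finsupp.le_def]
      intro i
      have hi := Finsupp.le_def.1 h i
      simp only [Finsupp.coe_smul, Pi.smul_apply, smul_eq_mul, Finsupp.add_apply, Finsupp.coe_add]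
      calc p * b i ≤ p * a i := Nat.mul_le_mul_left _ hi
      _ ≤ p * a i + e i := Nat.le_add_right _ _
  have hsub_eq : ∀ (a b : Fin n →₀ ℕ), b ≤ a → p • a + e - p • b = p • (a - b) + e := by
    intro a b hba
    ext i
    have hi := Finsupp.le_def.1 hba i
    simp only [Finsupp.tsub_apply, Finsupp.add_apply, Finsupp.coe_smul, Pi.smul_apply,
      smul_eq_mul, Finsupp.coe_add, Finsupp.coe_tsub, Pi.sub_apply]
    obtain ⟨t, ht⟩ : ∃ t, a i = b i + t := ⟨a i - b i, by omega⟩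
    rw [ht, Nat.add_sub_cancel_left, Nat.mul_add]
    generalize p * b i = B
    generalize p * t = T
    omega
  -- key semilinearity
  have hmulp : ∀ (h g : MvPolynomial (Fin n) k), π (h ^ p * g) = h * π g := by
    intro h g
    induction h using MvPolynomial.induction_on' with
    | monomial b c =>
      rw [monomial_pow]
      ext a
      rw [hπcoeff, coeff_monomial_mul', coeff_monomial_mul']
      by_cases hba : b ≤ a
      · rw [if_pos ((hle_iff a b).2 hba), if_pos hba, hsub_eq a b hba, map_mul, hρpow,
          hπcoeff]
      · rw [if_neg (fun hc => hba ((hle_iff a b).1 hc)), if_neg hba, map_zero]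
    | add q r hq hr =>
      have : (q + r) ^ p = q ^ p + r ^ p := add_pow_char q r p
      rw [this, add_mul, map_add, hq, hr, add_mul]
  -- the polynomial u = f^(p-1) and its leading coefficient
  set u : MvPolynomial (Fin n) k := f ^ (p - 1) with hudef
  have hp1 : p - 2 + 1 = p - 1 := by omega
  obtain ⟨hulead, hucoeff⟩ := by
    have := aux_lead_pow hlt hm (p - 2)
    rw [hp1] at this
    exact this
  have hc0 : coeff m f ≠ 0 := mem_support_iff.1 hm.1
  have hcu0 : coeff e u ≠ 0 := by
    rw [hedef, hudef, hucoeff]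
    exact pow_ne_zero _ hc0
  have hu_hom : u.IsHomogeneous (d * (p - 1)) := hfhom.pow (p - 1)
  -- degree facts
  have hdeg_add : ∀ x y : Fin n →₀ ℕ, (x + y).degree = x.degree + y.degree := by
    intro x y
    simp only [Finsupp.degree_eq_weight_one]
    exact map_add _ x y
  have hdeg_smul : ∀ (c : ℕ) (x : Fin n →₀ ℕ), (c • x).degree = c * x.degree := by
    intro c x
    simp only [Finsupp.degree_eq_weight_one]
    rw [map_nsmul]
    simp [smul_eq_mul]
  have hdeg_m : m.degree = d := by
    by_contra h
    exact (mem_support_iff.1 hm.1) (hfhom.coeff_eq_zero h)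
  -- π u is the constant ρ (coeff e u)
  have hπu : π u = C (ρ (coeff e u)) := by
    ext a
    rw [hπcoeff, coeff_C]
    by_cases ha : a = 0
    · subst ha
      rw [if_pos rfl]
      congr 1
      congr 1
      simp
    · rw [if_neg (Ne.symm ha)]
      have hdeg : (p • a + e).degree ≠ d * (p - 1) := by
        rw [hdeg_add, hdeg_smul, hedef, hdeg_smul, hdeg_m]
        have ha' : a.degree ≠ 0 := fun hc => ha ((Finsupp.degree_eq_zero_iff a).1 hc)
        have hpa : p * a.degree ≠ 0 := Nat.mul_ne_zero (by omega) ha'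
        rw [mul_comm d (p - 1)]
        intro hcon
        generalize hX : p * a.degree = X at hpa hcon
        omega
      rw [hu_hom.coeff_eq_zero hdeg, map_zero]
  set c' : k := ρ (coeff e u) with hc'def
  have hc' : c' ≠ 0 := fun hc => hcu0 (hρinj (by rw [← hc'def, hc, map_zero]))
  -- the splitting on the polynomial ring
  set φ' : MvPolynomial (Fin n) k →+ MvPolynomial (Fin n) k :=
    (AddMonoidHom.mulLeft (C c'⁻¹)).comp (π.comp (AddMonoidHom.mulLeft u)) with hφ'def
  have hφ'apply : ∀ g, φ' g = C c'⁻¹ * π (u * g) := fun g => rfl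
  have hφ'1 : φ' 1 = 1 := by
    rw [hφ'apply, mul_one, hπu, ← map_mul, inv_mul_cancel₀ hc', map_one]
  have hφ'p : ∀ h g, φ' (h ^ p * g) = h * φ' g := by
    intro h g
    rw [hφ'apply, hφ'apply]
    have : u * (h ^ p * g) = h ^ p * (u * g) := by ring
    rw [this, hmulp]
    ring
  have hfp : u * f = f ^ p := by
    rw [hudef, ← pow_succ]
    congr 1
    omega
  have hφ'I : ∀ g ∈ Ideal.span {f}, φ' g ∈ Ideal.span ({f} : Set (MvPolynomial (Fin n) k)) := by
    intro g hg
    obtain ⟨h, rfl⟩ := (Ideal.mem_span_singleton).1 hg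
    rw [hφ'apply]
    have : u * (f * h) = f ^ p * h := by rw [← hfp]; ring
    rw [this, hmulp]
    exact Ideal.mem_span_singleton.2 ⟨C c'⁻¹ * π h, by ring⟩
  -- descend to the quotient
  set I : Ideal (MvPolynomial (Fin n) k) := Ideal.span {f} with hIdef
  set mk : MvPolynomial (Fin n) k →+* MvPolynomial (Fin n) k ⧸ I := Ideal.Quotient.mk I
    with hmkdef
  have hmksurj : Function.Surjective mk := Ideal.Quotient.mk_surjective
  have key : ∀ g g', mk g = mk g' → mk (φ' g) = mk (φ' g') := by
    intro g g' hgg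
    rw [Ideal.Quotient.eq] at hgg ⊢
    have : φ' g - φ' g' = φ' (g - g') := (map_sub φ' g g').symm
    rw [this]
    exact hφ'I _ hgg
  set sf : MvPolynomial (Fin n) k ⧸ I → MvPolynomial (Fin n) k :=
    Function.surjInv hmksurj with hsfdef
  have hsf : ∀ x, mk (sf x) = x := fun x => Function.surjInv_eq hmksurj x
  refine ⟨AddMonoidHom.mk' (fun x => mk (φ' (sf x))) ?_, ?_, ?_⟩
  · intro x y
    have h1 : mk (sf (x + y)) = mk (sf x + sf y) := by rw [mk.map_add, hsf, hsf, hsf]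
    show mk (φ' (sf (x + y))) = mk (φ' (sf x)) + mk (φ' (sf y))
    rw [key _ _ h1, φ'.map_add, mk.map_add]
  · intro r s
    obtain ⟨a, rfl⟩ := hmksurj r
    obtain ⟨b, rfl⟩ := hmksurj s
    show mk (φ' (sf (mk a ^ p * mk b))) = mk a * mk (φ' (sf (mk b)))
    have h1 : mk (sf (mk a ^ p * mk b)) = mk (a ^ p * b) := by
      rw [hsf, mk.map_mul, mk.map_pow]
    rw [key _ _ h1, hφ'p, mk.map_mul, key _ _ (hsf (mk b))]
  · show mk (φ' (sf 1)) = 1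
    have h1 : mk (sf 1) = mk 1 := by rw [hsf, mk.map_one]
    rw [key _ _ h1, hφ'1, map_one]
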